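/- (Unified NTT splitting map.) Let R be a commutative ring, α ≥ 1 an integer, and N ≥ 2 an even integer. Let S = R[y]/(y^N − y^{N/2} + 1) and let ȳ ∈ S denote the class of y. Then there is a ring isomorphism R[x]/(x^{αN} − x^{αN/2} + 1) ≅ S[x]/(x^α − ȳ), under which the class of x on the left corresponds to the class of x on the right (so that ȳ corresponds to x^α). -/

import Mathlib

open Polynomial

set_option maxHeartbeats 1000000

/-- The ring `S = R[y]/(y^N − y^{N/2} + 1)`. -/
abbrev Sring (R : Type*) [CommRing R] (N : ℕ) : Type _ :=
  Polynomial R ⧸ Ideal.span {(X : Polynomial R) ^ N - X ^ (N / 2) + 1}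

noncomputable instance (R : Type*) [CommRing R] (N : ℕ) : CommRing (Sring R N) :=
  Ideal.Quotient.commRing _

/-- The class `ȳ ∈ S` of the variable `y`. -/
noncomputable def ybar (R : Type*) [CommRing R] (N : ℕ) : Sring R N :=
  Ideal.Quotient.mk (Ideal.span {(X : Polynomial R) ^ N - X ^ (N / 2) + 1}) X

/-- Unified NTT splitting map: with `S = R[y]/(y^N − y^{N/2} + 1)` and `ȳ` the class of `y`,
there is a ring isomorphism `R[x]/(x^{αN} − x^{αN/2} + 1) ≅ S[x]/(x^α − ȳ)` sending the
class of `x` to the class of `x` (so that `ȳ` corresponds to `x^α`). -/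
theorem unified_ntt_splitting {R : Type*} [CommRing R] (α N : ℕ)
    (hα : 1 ≤ α) (hN : 2 ≤ N) (hNe : Even N) :
    ∃ e : (Polynomial R ⧸
            Ideal.span {(X : Polynomial R) ^ (α * N) - X ^ (α * N / 2) + 1}) ≃+*
          (Polynomial (Sring R N) ⧸
            Ideal.span {(X : Polynomial (Sring R N)) ^ α - C (ybar R N)}),
      e (Ideal.Quotient.mk
            (Ideal.span {(X : Polynomial R) ^ (α * N) - X ^ (α * N / 2) + 1}) X)
        = Ideal.Quotient.mk
            (Ideal.span {(X : Polynomial (Sring R N)) ^ α - C (ybar R N)}) X := by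
  classical
  -- notation
  set If : Ideal (Polynomial R) :=
    Ideal.span {(X : Polynomial R) ^ (α * N) - X ^ (α * N / 2) + 1} with hIf
  set Ih : Ideal (Polynomial R) :=
    Ideal.span {(X : Polynomial R) ^ N - X ^ (N / 2) + 1} with hIh
  set Ig : Ideal (Polynomial (Sring R N)) :=
    Ideal.span {(X : Polynomial (Sring R N)) ^ α - C (ybar R N)} with hIg
  have hdiv : α * N / 2 = α * (N / 2) := by
    obtain ⟨k, hk⟩ := hNe
    subst hk
    have h1 : α * (k + k) = α * k * 2 := by ring
    have h2 : k + k = k * 2 := by ring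
    rw [h1, h2, Nat.mul_div_cancel _ two_pos, Nat.mul_div_cancel _ two_pos]
  have mkf := Ideal.Quotient.mk If
  -- ρ : R →+* Sring R N
  let ρ : R →+* Sring R N := (Ideal.Quotient.mk Ih).comp Polynomial.C
  -- key relation: x^α = C ȳ in the target quotient
  have hXα : (Ideal.Quotient.mk Ig X) ^ α = Ideal.Quotient.mk Ig (C (ybar R N)) := by
    rw [← map_pow, Ideal.Quotient.mk_eq_mk_iff_sub_mem]
    exact Ideal.subset_span rfl
  -- key relation: ȳ^N - ȳ^{N/2} + 1 = 0 in S
  have hy : (ybar R N) ^ N - (ybar R N) ^ (N / 2) + 1 = 0 := by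
    rw [ybar, ← map_pow, ← map_pow, ← map_sub, ← map_one (Ideal.Quotient.mk Ih), ← map_add,
      Ideal.Quotient.eq_zero_iff_mem]
    exact Ideal.subset_span rfl
  -- forward map
  let φ₀ : Polynomial R →+* (Polynomial (Sring R N) ⧸ Ig) :=
    (Ideal.Quotient.mk Ig).comp (Polynomial.mapRingHom ρ)
  have hφ₀ : ∀ a ∈ If, φ₀ a = 0 := by
    intro a ha
    rw [hIf, Ideal.mem_span_singleton] at ha
    obtain ⟨c, rfl⟩ := ha
    rw [map_mul]
    convert zero_mul (φ₀ c)
    show Ideal.Quotient.mk Ig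
      (Polynomial.map ρ ((X : Polynomial R) ^ (α * N) - X ^ (α * N / 2) + 1)) = 0
    have hCmk : Ideal.Quotient.mk Ig (C (ybar R N)) =
        ((Ideal.Quotient.mk Ig).comp (Polynomial.C)) (ybar R N) := rfl
    rw [Polynomial.map_add, Polynomial.map_sub, Polynomial.map_pow, Polynomial.map_pow,
      Polynomial.map_X, Polynomial.map_one, map_add, map_sub, map_pow, map_pow, map_one,
      hdiv, pow_mul, pow_mul, hXα, hCmk, ← map_pow, ← map_pow, ← map_sub,
      ← map_one ((Ideal.Quotient.mk Ig).comp (Polynomial.C)), ← map_add, hy, map_zero]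
  let φ : (Polynomial R ⧸ If) →+* (Polynomial (Sring R N) ⧸ Ig) :=
    Ideal.Quotient.lift If φ₀ hφ₀
  -- backward map: first τ : Polynomial R →+* Polynomial R ⧸ If, sending y ↦ x^α
  let τ : Polynomial R →+* (Polynomial R ⧸ If) :=
    Polynomial.eval₂RingHom ((Ideal.Quotient.mk If).comp Polynomial.C)
      ((Ideal.Quotient.mk If X) ^ α)
  have hτ : ∀ a ∈ Ih, τ a = 0 := by
    intro a ha
    rw [hIh, Ideal.mem_span_singleton] at ha
    obtain ⟨c, rfl⟩ := ha
    rw [map_mul]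
    convert zero_mul (τ c)
    show Polynomial.eval₂ _ _ ((X : Polynomial R) ^ N - X ^ (N / 2) + 1) = 0
    rw [Polynomial.eval₂_add, Polynomial.eval₂_sub, Polynomial.eval₂_pow, Polynomial.eval₂_pow,
      Polynomial.eval₂_X, Polynomial.eval₂_one, ← pow_mul, ← pow_mul, ← hdiv, ← map_pow, ← map_pow, ← map_sub,
      ← (Ideal.Quotient.mk If).map_one, ← map_add, Ideal.Quotient.eq_zero_iff_mem]
    exact Ideal.subset_span rfl
  let σ : Sring R N →+* (Polynomial R ⧸ If) := Ideal.Quotient.lift Ih τ hτ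
  let ψ₀ : Polynomial (Sring R N) →+* (Polynomial R ⧸ If) :=
    Polynomial.eval₂RingHom σ (Ideal.Quotient.mk If X)
  have hψ₀ : ∀ a ∈ Ig, ψ₀ a = 0 := by
    intro a ha
    rw [hIg, Ideal.mem_span_singleton] at ha
    obtain ⟨c, rfl⟩ := ha
    rw [map_mul]
    convert zero_mul (ψ₀ c)
    show Polynomial.eval₂ _ _ ((X : Polynomial (Sring R N)) ^ α - C (ybar R N)) = 0
    rw [Polynomial.eval₂_sub, Polynomial.eval₂_pow, Polynomial.eval₂_X, Polynomial.eval₂_C]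
    have : σ (ybar R N) = (Ideal.Quotient.mk If X) ^ α := by
      show τ X = _
      simp [τ]
    rw [this, sub_self]
  let ψ : (Polynomial (Sring R N) ⧸ Ig) →+* (Polynomial R ⧸ If) :=
    Ideal.Quotient.lift Ig ψ₀ hψ₀
  -- the two compositions are identities
  have hψφ : ψ.comp φ = RingHom.id _ := by
    apply Ideal.Quotient.ringHom_ext
    apply Polynomial.ringHom_ext
    · intro r
      show ψ (φ₀ (C r)) = Ideal.Quotient.mk If (C r)
      show ψ (Ideal.Quotient.mk Ig (Polynomial.map ρ (C r))) = _
      rw [Polynomial.map_C]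
      show ψ₀ (C (ρ r)) = _
      rw [show ψ₀ (C (ρ r)) = σ (ρ r) by simp [ψ₀]]
      show τ (C r) = _
      simp [τ]
    · show ψ (φ₀ X) = Ideal.Quotient.mk If X
      show ψ (Ideal.Quotient.mk Ig (Polynomial.map ρ X)) = _
      rw [Polynomial.map_X]
      show ψ₀ X = _
      simp [ψ₀]
  have hφσ : φ.comp σ = (Ideal.Quotient.mk Ig).comp Polynomial.C := by
    apply Ideal.Quotient.ringHom_ext
    apply Polynomial.ringHom_ext
    · intro r
      show φ (τ (C r)) = Ideal.Quotient.mk Ig (C (Ideal.Quotient.mk Ih (C r)))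
      have : τ (C r) = Ideal.Quotient.mk If (C r) := by simp [τ]
      rw [this]
      show φ₀ (C r) = _
      show Ideal.Quotient.mk Ig (Polynomial.map ρ (C r)) = _
      rw [Polynomial.map_C]
      rfl
    · show φ (τ X) = Ideal.Quotient.mk Ig (C (ybar R N))
      have : τ X = (Ideal.Quotient.mk If X) ^ α := by simp [τ]
      rw [this, map_pow]
      have : φ (Ideal.Quotient.mk If X) = Ideal.Quotient.mk Ig X := by
        show φ₀ X = _
        show Ideal.Quotient.mk Ig (Polynomial.map ρ X) = _
        rw [Polynomial.map_X]
      rw [this, hXα]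
  have hφψ : φ.comp ψ = RingHom.id _ := by
    apply Ideal.Quotient.ringHom_ext
    apply Polynomial.ringHom_ext
    · intro s
      show φ (ψ₀ (C s)) = Ideal.Quotient.mk Ig (C s)
      rw [show ψ₀ (C s) = σ s by simp [ψ₀]]
      exact RingHom.congr_fun hφσ s
    · show φ (ψ₀ X) = Ideal.Quotient.mk Ig X
      rw [show ψ₀ X = Ideal.Quotient.mk If X by simp [ψ₀]]
      show φ₀ X = _
      show Ideal.Quotient.mk Ig (Polynomial.map ρ X) = _
      rw [Polynomial.map_X]
  refine ⟨RingEquiv.ofRingHom φ ψ hφψ hψφ, ?_⟩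
  show φ₀ X = _
  show Ideal.Quotient.mk Ig (Polynomial.map ρ X) = _
  rw [Polynomial.map_X]
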